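/- Let A ∈ (ℝ≥0)^{n×n}, v ∈ (ℝ≥0)ⁿ nonzero, and suppose A^{⊗ℓ} ⊗ v ≠ 0 for all ℓ ≥ 1. Fix t ≥ 1 and set r = [v : A^{⊗t} ⊗ v]^{1/t}. Then the sequence {r^ℓ · A^{⊗ℓ} ⊗ v}_{ℓ≥0} is bounded above in (ℝ≥0)ⁿ; in fact r^ℓ · A^{⊗ℓ} ⊗ v ≤ max_{0≤q<t} [v:A^{⊗t}⊗v]^{q/t} · A^{⊗q} ⊗ v for all ℓ. -/

import Mathlib

set_option synthInstance.maxHeartbeats 1000000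
open scoped NNReal

def maxMul {n : ℕ} (A : Matrix (Fin n) (Fin n) ℝ≥0) (v : Fin n → ℝ≥0) : Fin n → ℝ≥0 :=
  fun i => Finset.univ.sup fun j => A i j * v j

def maxMatMul {n : ℕ} (A B : Matrix (Fin n) (Fin n) ℝ≥0) : Matrix (Fin n) (Fin n) ℝ≥0 :=
  fun i j => Finset.univ.sup fun k => A i k * B k j

def maxPow {n : ℕ} (A : Matrix (Fin n) (Fin n) ℝ≥0) : ℕ → Matrix (Fin n) (Fin n) ℝ≥0
  | 0 => 1
  | (t + 1) => maxMatMul A (maxPow A t)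

noncomputable def bracket {n : ℕ} (v w : Fin n → ℝ≥0) : ℝ≥0 :=
  sSup {l : ℝ≥0 | l • w ≤ v}

lemma mulSup {n : ℕ} (c : ℝ≥0) (f : Fin n → ℝ≥0) :
    c * Finset.univ.sup f = Finset.univ.sup fun j => c * f j := by
  refine Finset.comp_sup_eq_sup_comp (c * ·) (fun x y => ?_) (by simp)
  exact mul_max_of_nonneg _ _ zero_le

lemma maxMul_mono {n : ℕ} (A : Matrix (Fin n) (Fin n) ℝ≥0) {v w : Fin n → ℝ≥0}
    (h : v ≤ w) : maxMul A v ≤ maxMul A w := fun i =>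
  Finset.sup_mono_fun fun j _ => mul_le_mul_right (h j) _

lemma maxMul_smul {n : ℕ} (A : Matrix (Fin n) (Fin n) ℝ≥0) (c : ℝ≥0) (v : Fin n → ℝ≥0) :
    maxMul A (c • v) = c • maxMul A v := by
  funext i
  show (Finset.univ.sup fun j => A i j * (c * v j)) = c * Finset.univ.sup fun j => A i j * v j
  rw [mulSup]
  congr 1; funext j; ring

lemma maxMul_one {n : ℕ} (v : Fin n → ℝ≥0) : maxMul 1 v = v := by
  funext i
  apply le_antisymm
  · apply Finset.sup_le
    intro j _
    rcases eq_or_ne i j with rfl | h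
    · simp [Matrix.one_apply_eq]
    · simp [Matrix.one_apply_ne h]
  · refine le_trans ?_ (Finset.le_sup (f := fun j => (1 : Matrix (Fin n) (Fin n) ℝ≥0) i j * v j) (Finset.mem_univ i))
    simp [Matrix.one_apply_eq]

lemma maxMul_assoc {n : ℕ} (A B : Matrix (Fin n) (Fin n) ℝ≥0) (v : Fin n → ℝ≥0) :
    maxMul (maxMatMul A B) v = maxMul A (maxMul B v) := by
  funext i
  show (Finset.univ.sup fun j => (Finset.univ.sup fun k => A i k * B k j) * v j)
      = Finset.univ.sup fun k => A i k * Finset.univ.sup fun j => B k j * v j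
  have h1 : ∀ j, (Finset.univ.sup fun k => A i k * B k j) * v j
      = Finset.univ.sup fun k => A i k * B k j * v j := by
    intro j
    rw [mul_comm, mulSup]
    congr 1; funext k; ring
  simp_rw [h1, mulSup, ← mul_assoc]
  exact Finset.sup_comm _ _ _

lemma maxPow_add {n : ℕ} (A : Matrix (Fin n) (Fin n) ℝ≥0) (a b : ℕ) (v : Fin n → ℝ≥0) :
    maxMul (maxPow A (a + b)) v = maxMul (maxPow A a) (maxMul (maxPow A b) v) := by
  induction a with
  | zero => simp [maxPow, maxMul_one]
  | succ a ih =>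
      have : a + 1 + b = (a + b) + 1 := by ring
      rw [this]
      show maxMul (maxMatMul A (maxPow A (a + b))) v = _
      rw [maxMul_assoc, ih, ← maxMul_assoc]
      rfl

lemma bracket_smul_le {n : ℕ} (v w : Fin n → ℝ≥0) : bracket v w • w ≤ v := by
  intro i
  show sSup {l : ℝ≥0 | l • w ≤ v} * w i ≤ v i
  rcases eq_or_ne (w i) 0 with h | h
  · simp [h]
  · rw [← le_div_iff₀ (pos_iff_ne_zero.mpr h)]
    apply csSup_le ⟨0, by simp [Set.mem_setOf_eq]⟩
    intro l hl
    rw [le_div_iff₀ (pos_iff_ne_zero.mpr h)]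
    exact hl i

theorem stmt11 {n : ℕ} (A : Matrix (Fin n) (Fin n) ℝ≥0) (v : Fin n → ℝ≥0)
    (hv : v ≠ 0) (hpow : ∀ l : ℕ, 1 ≤ l → maxMul (maxPow A l) v ≠ 0)
    (t : ℕ) (ht : 1 ≤ t) (r : ℝ≥0)
    (hr : r = bracket v (maxMul (maxPow A t) v) ^ ((1 : ℝ) / t)) :
    (∃ b : Fin n → ℝ≥0, ∀ l : ℕ, r ^ l • maxMul (maxPow A l) v ≤ b) ∧
    (∀ l : ℕ, r ^ l • maxMul (maxPow A l) v ≤ fun j =>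
      (Finset.range t).sup fun q =>
        bracket v (maxMul (maxPow A t) v) ^ ((q : ℝ) / t) * maxMul (maxPow A q) v j) := by
  set C := bracket v (maxMul (maxPow A t) v) with hC
  have ht0 : (t : ℝ) ≠ 0 := Nat.cast_ne_zero.mpr (by omega)
  have hrpow : ∀ l : ℕ, r ^ l = C ^ ((l : ℝ) / t) := by
    intro l
    rw [hr, ← NNReal.rpow_natCast (C ^ ((1:ℝ)/t)) l, ← NNReal.rpow_mul]
    congr 1
    field_simp
  have hrt : r ^ t = C := by
    rw [hrpow t, div_self ht0, NNReal.rpow_one]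
  have key : ∀ l : ℕ, r ^ l • maxMul (maxPow A l) v ≤ fun j =>
      (Finset.range t).sup fun q => C ^ ((q : ℝ) / t) * maxMul (maxPow A q) v j := by
    intro l
    induction l using Nat.strong_induction_on with
    | _ l ih =>
      rcases lt_or_ge l t with hlt | hge
      · intro j
        show r ^ l * maxMul (maxPow A l) v j ≤ _
        rw [hrpow l]
        exact Finset.le_sup (f := fun q : ℕ => C ^ ((q : ℝ) / t) * maxMul (maxPow A q) v j)
          (Finset.mem_range.mpr hlt)
      · obtain ⟨m, rfl⟩ : ∃ m, l = m + t := ⟨l - t, by omega⟩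
        have hm : m < m + t := by omega
        have step : ∀ j, r ^ (m + t) * maxMul (maxPow A (m + t)) v j
            ≤ r ^ m * maxMul (maxPow A m) v j := by
          intro j
          rw [maxPow_add, pow_add, mul_assoc]
          apply mul_le_mul_right
          have h1 : r ^ t * maxMul (maxPow A m) (maxMul (maxPow A t) v) j
              = maxMul (maxPow A m) (r ^ t • maxMul (maxPow A t) v) j := by
            rw [maxMul_smul]; rfl
          rw [h1]
          refine maxMul_mono _ ?_ j
          rw [hrt]
          exact bracket_smul_le v _
        exact fun j => le_trans (step j) (ih m hm j)
  exact ⟨⟨_, key⟩, key⟩
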